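/- Suppose κ is a regular uncountable cardinal, λ ≥ κ, cf(λ) < κ, and for every cardinal μ with κ ≤ μ < λ there is a family of at most λ clubs of [μ]^{<κ} such that every club of [μ]^{<κ} contains a member of this family. Then there exists a club of [λ]^{<κ} which contains no unbounded non-stationary subset, i.e., every unbounded subset of this club is stationary. -/

import Mathlib

open Cardinal Set

noncomputable section

/-- A finitary function on the ordinals: an arity `n` together with an
`n`-ary function on ordinals. -/
abbrev FinFun := Σ n : ℕ, (Fin n → Ordinal.{0}) → Ordinal.{0}

/-- `[λ]^{<κ}`: the collection of subsets of `λ` (viewed as the set of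
ordinals `< λ`) of cardinality `< κ`. -/
def smallSubsets (lam kap : Cardinal.{0}) : Set (Set Ordinal.{0}) :=
  {a | (∀ x ∈ a, x < lam.ord) ∧ Cardinal.mk ↥a < Cardinal.lift.{1} kap}

/-- The countable family `F` consists of finitary functions *on `λ`*. -/
def FamOn (lam : Cardinal.{0}) (F : Set FinFun) : Prop :=
  ∀ f ∈ F, ∀ x : Fin f.1 → Ordinal.{0}, (∀ i, x i < lam.ord) → f.2 x < lam.ord

/-- The club `C_F` of `[λ]^{<κ}` associated to a family `F` of finitary
functions on `λ`: the members `a` of `[λ]^{<κ}` closed under every function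
of `F` and such that `a ∩ κ` is an ordinal (an initial segment of `κ`). -/
def clubOf (lam kap : Cardinal.{0}) (F : Set FinFun) : Set (Set Ordinal.{0}) :=
  {a | a ∈ smallSubsets lam kap ∧
    (∀ f ∈ F, ∀ x : Fin f.1 → Ordinal.{0}, (∀ i, x i ∈ a) → f.2 x ∈ a) ∧
    ∃ β < kap.ord, a ∩ Set.Iio kap.ord = Set.Iio β}

/-- `C` is a club of `[λ]^{<κ}`. -/
def IsClubSet (lam kap : Cardinal.{0}) (C : Set (Set Ordinal.{0})) : Prop :=
  ∃ F : Set FinFun, F.Countable ∧ FamOn lam F ∧ C = clubOf lam kap F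

/-- `S` is a stationary subset of `[λ]^{<κ}`: it meets every club. -/
def IsStationarySet (lam kap : Cardinal.{0}) (S : Set (Set Ordinal.{0})) : Prop :=
  ∀ C, IsClubSet lam kap C → (S ∩ C).Nonempty

/-- `S` is an unbounded subset of `[λ]^{<κ}`: every member of `[λ]^{<κ}`
is contained in some member of `S`. -/
def IsUnbounded (lam kap : Cardinal.{0}) (S : Set (Set Ordinal.{0})) : Prop :=
  ∀ b ∈ smallSubsets lam kap, ∃ a ∈ S, b ⊆ a

/-- The club filter `E_{λ,κ}`: the filter generated by the clubs of
`[λ]^{<κ}`. -/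
def clubFilter (lam kap : Cardinal.{0}) : Filter (Set Ordinal.{0}) :=
  Filter.generate {C | IsClubSet lam kap C}
/-- Apply a finitary function to an `n`-tuple, returning `0` on arity mismatch. -/
def apN (f : FinFun) (n : ℕ) (w : Fin n → Ordinal.{0}) : Ordinal.{0} :=
  if h : n = f.1 then f.2 (fun j => w (Fin.cast h.symm j)) else 0

theorem apN_self (f : FinFun) (w : Fin f.1 → Ordinal.{0}) : apN f f.1 w = f.2 w := by
  rw [apN, dif_pos rfl]
  rfl

theorem apN_lt {mu : Cardinal.{0}} {Fm : Set FinFun} (hFm : FamOn mu Fm) {f : FinFun}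
    (hf : f ∈ Fm) (h0 : (0 : Ordinal) < mu.ord) (n : ℕ) (w : Fin n → Ordinal.{0})
    (hw : ∀ j, w j < mu.ord) : apN f n w < mu.ord := by
  rw [apN]
  split
  · exact hFm f hf _ (fun j => hw _)
  · exact h0

/-- If `κ` is regular uncountable, `λ ≥ κ`, `cf(λ) < κ`, and for every
cardinal `μ` with `κ ≤ μ < λ` there is a family of at most `λ` clubs of
`[μ]^{<κ}` such that every club of `[μ]^{<κ}` contains a member of the
family, then some club of `[λ]^{<κ}` has all its unbounded subsets
stationary. -/
theorem exists_club_all_unbounded_subsets_stationary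
    (lam kap : Cardinal.{0}) (hreg : kap.IsRegular) (hunc : ℵ₀ < kap)
    (hkl : kap ≤ lam) (hcof : lam.ord.cof < kap)
    (hfam : ∀ mu : Cardinal.{0}, kap ≤ mu → mu < lam →
      ∃ D : Set (Set (Set Ordinal.{0})),
        Cardinal.mk ↥D ≤ Cardinal.lift.{1} lam ∧
        (∀ C ∈ D, IsClubSet mu kap C) ∧
        ∀ C, IsClubSet mu kap C → ∃ C' ∈ D, C' ⊆ C) :
    ∃ Cs, IsClubSet lam kap Cs ∧
      ∀ U ⊆ Cs, IsUnbounded lam kap U → IsStationarySet lam kap U := by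
  classical
  -- basic facts
  have hk0 : (0 : Ordinal) < kap.ord := by
    rw [Cardinal.lt_ord, Ordinal.card_zero]
    exact hreg.pos
  have hkordle : kap.ord ≤ lam.ord := Cardinal.ord_le_ord.2 hkl
  have hlam0 : (0 : Ordinal) < lam.ord := hk0.trans_le hkordle
  have hkl' : kap < lam := by
    rcases hkl.lt_or_eq with h | h
    · exact h
    · subst h
      rw [hreg.cof_eq] at hcof
      exact absurd hcof (lt_irrefl _)
  have hlimit : ∀ c : Cardinal.{0}, c < lam → Order.succ c < lam := by
    intro c hc
    rcases (Order.succ_le_of_lt hc).lt_or_eq with h | h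
    · exact h
    · exfalso
      have hc0 : ℵ₀ ≤ c := by
        by_contra hlt
        push_neg at hlt
        have h1 : Order.succ c ≤ ℵ₀ := Order.succ_le_of_lt hlt
        rw [h] at h1
        exact absurd (hunc.trans_le hkl) (not_lt.2 h1)
      have h2 := (Cardinal.isRegular_succ hc0).cof_eq
      rw [h] at h2
      rw [h2] at hcof
      exact absurd hkl (not_le.2 hcof)
  -- a cofinal sequence of length t
  set t : Ordinal := lam.ord.cof.ord with ht
  have htk : t < kap.ord := Cardinal.ord_lt_ord.2 hcof
  obtain ⟨sf, hsf⟩ := Ordinal.exists_blsub_cof lam.ord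
  set se : Ordinal → Ordinal := fun i => if h : i < t then sf i h else 0 with hse
  have hse_lt : ∀ i, se i < lam.ord := by
    intro i
    rw [hse]
    dsimp only
    split
    · rw [← hsf]; exact Ordinal.lt_blsub _ _ _
    · exact hlam0
  have hse_cov : ∀ y < lam.ord, ∃ i < t, y ≤ se i := by
    intro y hy
    rw [← hsf] at hy
    obtain ⟨i, hi, hyi⟩ := Ordinal.lt_blsub_iff.1 hy
    refine ⟨i, hi, ?_⟩
    rw [hse]
    dsimp only
    rw [dif_pos hi]
    exact hyi
  -- the intermediate cardinals
  set mu : Ordinal → Cardinal := fun i => max kap (Order.succ (se i).card) with hmu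
  have hmuk : ∀ i, kap ≤ mu i := fun i => le_max_left _ _
  have hmul : ∀ i, mu i < lam := by
    intro i
    exact max_lt hkl' (hlimit _ (Cardinal.lt_ord.1 (hse_lt i)))
  have hse_mu : ∀ i, se i < (mu i).ord := by
    intro i
    rw [Cardinal.lt_ord]
    exact lt_of_lt_of_le (Order.lt_succ _) (le_max_right _ _)
  have hmu0 : ∀ i, (0 : Ordinal) < (mu i).ord :=
    fun i => hk0.trans_le (Cardinal.ord_le_ord.2 (hmuk i))
  -- choose, for each i, a λ-indexed cofinal family of clubs of [mu i]^{<κ}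
  have hD : ∀ i : Ordinal, ∃ dd : Ordinal → Set (Set Ordinal.{0}),
      (∀ α, IsClubSet (mu i) kap (dd α)) ∧
      ∀ C, IsClubSet (mu i) kap C → ∃ α, α < lam.ord ∧ dd α ⊆ C := by
    intro i
    obtain ⟨D, hDcard, hDclub, hDcof⟩ := hfam (mu i) (hmuk i) (hmul i)
    have hclub0 : IsClubSet (mu i) kap (clubOf (mu i) kap ∅) :=
      ⟨∅, Set.countable_empty, fun f hf => absurd hf (Set.notMem_empty f), rfl⟩
    have hne : D.Nonempty := by
      obtain ⟨C', hC', _⟩ := hDcof _ hclub0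
      exact ⟨C', hC'⟩
    haveI : Nonempty ↥D := hne.to_subtype
    have hEq : Cardinal.mk ↥(Set.Iio lam.ord) = Cardinal.lift.{1} lam := by
      rw [Ordinal.mk_Iio_ordinal, Cardinal.card_ord]
    obtain ⟨emb⟩ := (Cardinal.le_def _ _).1 (hDcard.trans hEq.ge)
    refine ⟨fun α => if h : α < lam.ord then
        ((Function.invFun emb ⟨α, h⟩ : ↥D) : Set (Set Ordinal.{0}))
      else ((Classical.arbitrary ↥D : ↥D) : Set (Set Ordinal.{0})), ?_, ?_⟩
    · intro α
      dsimp only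
      split
      · exact hDclub _ (Subtype.coe_prop _)
      · exact hDclub _ (Subtype.coe_prop _)
    · intro C hC
      obtain ⟨C', hC'D, hsub⟩ := hDcof C hC
      refine ⟨(emb ⟨C', hC'D⟩ : ↥(Set.Iio lam.ord)).1, (emb ⟨C', hC'D⟩).2, ?_⟩
      dsimp only
      rw [dif_pos (show ((emb ⟨C', hC'D⟩ : ↥(Set.Iio lam.ord)) : Ordinal) < lam.ord from (emb ⟨C', hC'D⟩).2)]
      have heq : (⟨(emb ⟨C', hC'D⟩ : ↥(Set.Iio lam.ord)).1, (emb ⟨C', hC'D⟩).2⟩ :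
          ↥(Set.Iio lam.ord)) = emb ⟨C', hC'D⟩ := Subtype.ext rfl
      rw [heq, Function.leftInverse_invFun emb.injective]
      exact hsub
  choose d hd1 hd2 using hD
  -- generating families for the chosen clubs, and enumerations thereof
  set Fam : Ordinal → Ordinal → Set FinFun := fun i α => (hd1 i α).choose with hFamdef
  have hFam : ∀ i α, (Fam i α).Countable ∧ FamOn (mu i) (Fam i α) ∧
      d i α = clubOf (mu i) kap (Fam i α) := fun i α => (hd1 i α).choose_spec
  have hfe : ∀ i α : Ordinal, ∃ fe : ℕ → FinFun, Fam i α ⊆ Set.range fe := by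
    intro i α
    obtain ⟨fe, hfe⟩ := ((hFam i α).1.insert (⟨0, fun _ => (0 : Ordinal)⟩ : FinFun)).exists_eq_range
      ⟨_, Set.mem_insert _ _⟩
    exact ⟨fe, by rw [← hfe]; exact Set.subset_insert _ _⟩
  choose fenum hfenum using hfe
  -- the countable family of finitary functions generating our club
  set Gfun : ℕ → ℕ → FinFun := fun m n =>
    ⟨n + 2, fun v =>
      if (fenum (v ⟨0, by omega⟩) (v ⟨1, by omega⟩) m ∈ Fam (v ⟨0, by omega⟩) (v ⟨1, by omega⟩)
          ∧ ∀ j : Fin n, v ⟨(j : ℕ) + 2, by exact Nat.add_lt_add_right j.isLt 2⟩ <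
              (mu (v ⟨0, by omega⟩)).ord)
      then apN (fenum (v ⟨0, by omega⟩) (v ⟨1, by omega⟩) m) n
          (fun j => v ⟨(j : ℕ) + 2, by exact Nat.add_lt_add_right j.isLt 2⟩)
      else 0⟩ with hGfun
  set F : Set FinFun := Set.range (fun p : ℕ × ℕ => Gfun p.1 p.2) with hF
  have hFc : F.Countable := Set.countable_range _
  have hFon : FamOn lam F := by
    intro f hf x hx
    rw [hF] at hf
    obtain ⟨p, rfl⟩ := hf
    dsimp only [Gfun]
    split
    · next hcond =>
      exact (apN_lt (hFam _ _).2.1 hcond.1 (hmu0 _) _ _ hcond.2).trans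
        (Cardinal.ord_lt_ord.2 (hmul _))
    · exact hlam0
  -- the key property of members of our club
  have key : ∀ a, a ∈ clubOf lam kap F → ∀ i ∈ a, ∀ α ∈ a,
      a ∩ Set.Iio (mu i).ord ∈ d i α := by
    intro a ha i hi α hα
    obtain ⟨⟨hae, hac⟩, hclosed, β₀, hβ₀, haβ⟩ := ha
    rw [(hFam i α).2.2]
    refine ⟨⟨fun z hz => hz.2, (Cardinal.mk_le_mk_of_subset Set.inter_subset_left).trans_lt hac⟩,
      ?_, β₀, hβ₀, ?_⟩
    · intro f hf x hx
      obtain ⟨m, hm⟩ := hfenum i α hf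
      subst hm
      set vv : Fin ((fenum i α m).1 + 2) → Ordinal := fun j =>
        if h0 : (j : ℕ) = 0 then i else if h1 : (j : ℕ) = 1 then α
        else x ⟨(j : ℕ) - 2, by have hj := j.isLt; omega⟩ with hvv
      have hv0 : ∀ p, vv ⟨0, p⟩ = i := by
        intro p; rw [hvv]; simp
      have hv1 : ∀ p, vv ⟨1, p⟩ = α := by
        intro p; rw [hvv]; simp
      have hv2 : ∀ (k : ℕ) (p : k + 2 < (fenum i α m).1 + 2),
          vv ⟨k + 2, p⟩ = x ⟨k, by omega⟩ := by
        intro k p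
        rw [hvv]
        dsimp only
        rw [dif_neg (by omega), dif_neg (by omega)]
        rfl
      have hva : ∀ j, vv j ∈ a := by
        intro j
        rw [hvv]
        dsimp only
        split_ifs with h0 h1
        · exact hi
        · exact hα
        · exact (hx _).1
      have hmem' := hclosed (Gfun m (fenum i α m).1) ⟨(m, (fenum i α m).1), rfl⟩ vv hva
      dsimp only [Gfun] at hmem'
      rw [if_pos (by
        simp only [hv0, hv1, hv2]
        exact ⟨hf, fun j => (hx _).2⟩)] at hmem'
      simp only [hv0, hv1, hv2] at hmem'
      rw [apN_self] at hmem'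
      have hfin : ∀ L : Fin (fenum i α m).1 → Ordinal, (∀ j, L j = x j) →
          (fenum i α m).2 L ∈ a → (fenum i α m).2 x ∈ a := by
        intro L hL hmm
        rwa [show L = x from funext hL] at hmm
      exact ⟨hfin _ (fun j => congrArg x (Fin.ext rfl)) hmem',
        (hFam i α).2.1 _ hf x (fun j => (hx j).2)⟩
    · rw [Set.inter_assoc, Set.Iio_inter_Iio,
        min_eq_right (Cardinal.ord_le_ord.2 (hmuk i)), haβ]
  -- conclusion
  refine ⟨clubOf lam kap F, ⟨F, hFc, hFon, rfl⟩, ?_⟩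
  intro U hUc hUnb C hC
  obtain ⟨G, hGc, hGon, rfl⟩ := hC
  -- for each i, enumerate the one-step images under G below (mu i)
  have hT : ∀ (i : Ordinal) (n : ℕ) (x : Fin n → Ordinal), ∃ e : ℕ → Ordinal,
      (∀ m, e m < (mu i).ord) ∧
      ∀ y, y < (mu i).ord →
        (∃ g ∈ G, ∃ h : g.1 = n, y = g.2 (fun j => x (Fin.cast h j))) → ∃ m, e m = y := by
    intro i n x
    set T : Set Ordinal := {y | y < (mu i).ord ∧
      ∃ g ∈ G, ∃ h : g.1 = n, y = g.2 (fun j => x (Fin.cast h j))} with hTdef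
    have hTc : T.Countable := by
      have hsub : T ⊆ ⋃ g ∈ G, {y | ∃ h : g.1 = n, y = g.2 (fun j => x (Fin.cast h j))} := by
        rintro y ⟨-, g, hg, h⟩
        exact Set.mem_biUnion hg h
      refine Set.Countable.mono hsub (hGc.biUnion fun g hg => ?_)
      refine Set.Subsingleton.countable ?_
      rintro y1 ⟨h1, e1⟩ y2 ⟨h2, e2⟩
      subst e1; subst e2; rfl
    obtain ⟨e, he⟩ := (hTc.insert 0).exists_eq_range (Set.insert_nonempty _ _)
    refine ⟨e, ?_, ?_⟩
    · intro m
      have hm : e m ∈ insert (0 : Ordinal) T := by rw [he]; exact Set.mem_range_self m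
      rcases hm with hm | hm
      · rw [hm]; exact hmu0 i
      · exact hm.1
    · intro y hy hex
      have : y ∈ insert (0 : Ordinal) T := Set.mem_insert_of_mem _ ⟨hy, hex⟩
      rw [he] at this
      exact this
  choose en hen1 hen2 using hT
  set Hfun : Ordinal → Set FinFun := fun i =>
    Set.range (fun p : ℕ × ℕ => (⟨p.1, fun x => en i p.1 x p.2⟩ : FinFun)) with hHfun
  have hHclub : ∀ i, IsClubSet (mu i) kap (clubOf (mu i) kap (Hfun i)) := by
    intro i
    refine ⟨Hfun i, by rw [hHfun]; exact Set.countable_range _, ?_, rfl⟩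
    intro f hf x hx
    rw [hHfun] at hf
    obtain ⟨p, rfl⟩ := hf
    exact hen1 i p.1 x p.2
  have halpha : ∀ i : Ordinal, ∃ α, α < lam.ord ∧ d i α ⊆ clubOf (mu i) kap (Hfun i) :=
    fun i => hd2 i _ (hHclub i)
  choose alpha halt hasub using halpha
  -- a suitable seed
  set b : Set Ordinal := Set.Iio t ∪ alpha '' Set.Iio t with hb
  have hbss : b ∈ smallSubsets lam kap := by
    constructor
    · rintro z (hz | ⟨i, hit, rfl⟩)
      · exact (hz.trans htk).trans_le hkordle
      · exact halt i
    · have h1 : Cardinal.mk ↥(Set.Iio t) < Cardinal.lift.{1} kap := by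
        rw [Ordinal.mk_Iio_ordinal, ht, Cardinal.card_ord]
        exact Cardinal.lift_lt.2 hcof
      have h2 : Cardinal.mk ↥(alpha '' Set.Iio t) < Cardinal.lift.{1} kap :=
        lt_of_le_of_lt Cardinal.mk_image_le h1
      calc Cardinal.mk ↥b ≤ _ + _ := by rw [hb]; exact Cardinal.mk_union_le _ _
        _ < Cardinal.lift.{1} kap :=
          Cardinal.add_lt_of_lt (Cardinal.aleph0_le_lift.2 hreg.aleph0_le) h1 h2
  obtain ⟨a, haU, hba⟩ := hUnb b hbss
  have haCs := hUc haU
  obtain ⟨⟨hae, hac⟩, -, β₀, hβ₀, haβ⟩ := haCs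
  refine ⟨a, haU, ⟨hae, hac⟩, ?_, β₀, hβ₀, haβ⟩
  -- a is closed under G
  intro g hg x hx
  have hylam : g.2 x < lam.ord := hGon g hg x (fun j => hae _ (hx j))
  have hsupl : Finset.univ.sup x < lam.ord := by
    refine (Finset.sup_lt_iff ?_).2 (fun j _ => hae _ (hx j))
    rw [Ordinal.bot_eq_zero]; exact hlam0
  have hw : max (g.2 x) (Finset.univ.sup x) < lam.ord := max_lt hylam hsupl
  obtain ⟨i, hit, hwse⟩ := hse_cov _ hw
  have hxb : ∀ j, x j < (mu i).ord := fun j =>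
    (((Finset.le_sup (Finset.mem_univ j)).trans ((le_max_right _ _).trans hwse))).trans_lt
      (hse_mu i)
  have hyb : g.2 x < (mu i).ord := ((le_max_left _ _).trans hwse).trans_lt (hse_mu i)
  have hia : i ∈ a := hba (Or.inl hit)
  have haa : alpha i ∈ a := hba (Or.inr ⟨i, hit, rfl⟩)
  have hb' : a ∩ Set.Iio (mu i).ord ∈ clubOf (mu i) kap (Hfun i) :=
    hasub i (key a (hUc haU) i hia (alpha i) haa)
  obtain ⟨-, hb'cl, -⟩ := hb'
  obtain ⟨m, hm⟩ := hen2 i g.1 x (g.2 x) hyb ⟨g, hg, rfl, rfl⟩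
  have hcl := hb'cl ⟨g.1, fun x' => en i g.1 x' m⟩ ⟨(g.1, m), rfl⟩ x
    (fun j => ⟨hx j, hxb j⟩)
  have hcl' : en i g.1 x m ∈ a ∩ Set.Iio (mu i).ord := hcl
  rw [hm] at hcl'
  exact hcl'.1
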